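/- For every complex number x with |x| < 1, the series Σ_{k=2}^∞ (−1)^k ζ(k) x^k / k converges and Γ(1 + x) = exp( −γ x + Σ_{k=2}^∞ (−1)^k ζ(k) x^k / k ), where Γ is the complex Gamma function, ζ is the Riemann zeta function, and γ is the Euler–Mascheroni constant. -/

import Mathlib

open Complex Finset Filter Topology

private lemma hasSum_log_aux' {z : ℂ} (hz : ‖z‖ < 1) :
    HasSum (fun k : ℕ => (-1 : ℂ)^k * z^(k+2) / (k+2)) (z - Complex.log (1 + z)) := by
  have h := Complex.hasSum_taylorSeries_log hz
  rw [← hasSum_nat_add_iff' 2] at h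
  have hs : (∑ i ∈ Finset.range 2, ((-1:ℂ))^(i+1) * z^i / i) = z := by
    simp [Finset.sum_range_succ]
  rw [hs] at h
  have h2 := h.neg
  rw [neg_sub] at h2
  convert h2 using 2 with n
  · rfl
  push_cast
  rw [pow_succ, pow_succ, pow_succ]
  ring

private lemma summable_F' {x : ℂ} (hx : ‖x‖ < 1) :
    Summable (fun p : ℕ × ℕ => (-1:ℂ)^p.2 * (x/(p.1+1))^(p.2+2) / (p.2+2)) := by
  have hr0 : ∀ m : ℕ, 0 ≤ ‖x‖ / (m+1) := fun m => by positivity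
  have hr1 : ∀ m : ℕ, ‖x‖ / (m+1) < 1 := fun m => by
    apply lt_of_le_of_lt _ hx
    rw [div_le_iff₀ (by positivity)]
    nlinarith [norm_nonneg x, (Nat.cast_nonneg m : (0:ℝ) ≤ m)]
  have hg : Summable (fun p : ℕ × ℕ => (‖x‖/(p.1+1))^(p.2+2)) := by
    rw [summable_prod_of_nonneg (fun p => by positivity)]
    constructor
    · intro m
      have := (summable_geometric_of_lt_one (hr0 m) (hr1 m)).mul_left ((‖x‖/(m+1))^2)
      refine this.congr fun k => ?_
      rw [← pow_add]; ring_nf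
    · have key : ∀ m : ℕ, (∑' k : ℕ, (‖x‖/(m+1))^(k+2))
          ≤ (‖x‖^2 * (1-‖x‖)⁻¹) * (1/((m:ℝ)+1)^2) := by
        intro m
        have ht : (∑' k : ℕ, (‖x‖/(m+1))^(k+2))
            = (‖x‖/(m+1))^2 * (1 - ‖x‖/(m+1))⁻¹ := by
          rw [← tsum_geometric_of_lt_one (hr0 m) (hr1 m), ← tsum_mul_left]
          congr 1; funext k; rw [← pow_add]; ring_nf
        rw [ht, div_pow]
        have h1 : (1 - ‖x‖/(m+1))⁻¹ ≤ (1-‖x‖)⁻¹ := by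
          apply inv_anti₀ (by linarith)
          have : ‖x‖ / (m+1) ≤ ‖x‖ := by
            rw [div_le_iff₀ (by positivity)]
            nlinarith [norm_nonneg x, (Nat.cast_nonneg m : (0:ℝ) ≤ m)]
          linarith
        calc ‖x‖^2/((m:ℝ)+1)^2 * (1 - ‖x‖/(m+1))⁻¹
            ≤ ‖x‖^2/((m:ℝ)+1)^2 * (1-‖x‖)⁻¹ := by
              apply mul_le_mul_of_nonneg_left h1 (by positivity)
          _ = (‖x‖^2 * (1-‖x‖)⁻¹) * (1/((m:ℝ)+1)^2) := by ring
      have hbase : Summable (fun m : ℕ => (‖x‖^2 * (1-‖x‖)⁻¹) * (1/((m:ℝ)+1)^2)) := by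
        apply Summable.mul_left
        have := (Real.summable_one_div_nat_pow (p := 2)).mpr one_lt_two
        have h2 := (summable_nat_add_iff 1).mpr this
        refine h2.congr fun m => ?_
        push_cast; ring
      exact Summable.of_nonneg_of_le (fun m => tsum_nonneg fun k => by positivity)
        key hbase
  rw [← summable_norm_iff]
  refine hg.of_nonneg_of_le (fun p => norm_nonneg _) fun p => ?_
  rw [norm_div, norm_mul, norm_pow, norm_pow, norm_neg, norm_one, one_pow, one_mul,
    norm_div]
  have h1 : ‖((p.1:ℂ))+1‖ = (p.1:ℝ)+1 := by
    norm_cast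
  have h2 : ‖((p.2:ℂ))+2‖ = (p.2:ℝ)+2 := by
    norm_cast
  rw [h1, h2]
  rw [div_le_iff₀ (by positivity)]
  rw [div_pow]
  nlinarith [pow_nonneg (norm_nonneg x) (p.2+2), pow_pos (show (0:ℝ) < (p.1:ℝ)+1 by positivity) (p.2+2),
    div_nonneg (pow_nonneg (norm_nonneg x) (p.2+2)) (pow_nonneg (by positivity : (0:ℝ) ≤ (p.1:ℝ)+1) (p.2+2))]

private lemma row_hasSum' (x : ℂ) (k : ℕ) :
    HasSum (fun m : ℕ => (-1:ℂ)^k * (x/(m+1))^(k+2) / (k+2))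
      ((-1 : ℂ) ^ (k + 2) * riemannZeta (k + 2) * x ^ (k + 2) / (k + 2)) := by
  have hsum : Summable (fun n : ℕ => 1 / (n:ℂ)^(k+2)) := by
    rw [← summable_norm_iff]
    have : Summable (fun n : ℕ => 1 / (n:ℝ)^(k+2)) :=
      (Real.summable_one_div_nat_pow).mpr (by omega)
    refine this.congr fun n => ?_
    rw [norm_div, norm_one, norm_pow, Complex.norm_natCast]
  have hz : riemannZeta ((k:ℂ) + 2) = ∑' n : ℕ, 1 / (n:ℂ)^(k+2) := by
    have := zeta_nat_eq_tsum_of_gt_one (k := k + 2) (by omega)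
    push_cast at this ⊢
    exact this
  have hshift : HasSum (fun m : ℕ => 1 / ((m:ℂ)+1)^(k+2)) (riemannZeta ((k:ℂ) + 2)) := by
    have h1 : Summable (fun m : ℕ => 1 / ((m:ℂ)+1)^(k+2)) := by
      have := (summable_nat_add_iff 1).mpr hsum
      refine this.congr fun m => ?_
      push_cast; ring
    have h2 : (∑' m : ℕ, 1 / ((m:ℂ)+1)^(k+2)) = riemannZeta ((k:ℂ) + 2) := by
      rw [hz, Summable.tsum_eq_zero_add hsum]
      simp
    exact h2 ▸ h1.hasSum
  have := hshift.mul_left ((-1:ℂ)^k * x^(k+2) / (k+2))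
  have heq : ((-1:ℂ)^k * x^(k+2) / (k+2)) * riemannZeta ((k:ℂ)+2)
      = (-1 : ℂ) ^ (k + 2) * riemannZeta ((k:ℂ) + 2) * x ^ (k + 2) / ((k:ℂ) + 2) := by
    rw [pow_add]; ring
  rw [heq] at this
  refine this.congr_fun fun m => ?_
  rw [div_pow]
  have : ((m:ℂ)+1) ^ (k+2) ≠ 0 := by
    apply pow_ne_zero
    exact_mod_cast Nat.cast_add_one_ne_zero (R := ℂ) m
  field_simp

private lemma norm_div_lt' {x : ℂ} (hx : ‖x‖ < 1) (j : ℕ) : ‖x/((j:ℂ)+1)‖ < 1 := by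
  rw [norm_div]
  have h1 : ‖((j:ℂ)+1)‖ = (j:ℝ)+1 := by norm_cast
  rw [h1]
  calc ‖x‖/((j:ℝ)+1) ≤ ‖x‖ :=
        div_le_self (norm_nonneg x) (by linarith [Nat.cast_nonneg (α := ℝ) j])
    _ < 1 := hx

private lemma one_add_ne' {x : ℂ} (hx : ‖x‖ < 1) (j : ℕ) : (1 + x/((j:ℂ)+1)) ≠ 0 := by
  intro h
  have h2 : x/((j:ℂ)+1) = -1 := by linear_combination h
  have := norm_div_lt' hx j
  rw [h2] at this
  simp at this

private lemma gammaSeq_eq_exp' {x : ℂ} (hx : ‖x‖ < 1) {n : ℕ} (hn : 1 ≤ n) :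
    Complex.GammaSeq (1+x) n =
      Complex.exp ((Real.log n : ℂ) * (1+x) - (Real.log (n+1) : ℂ)
        - ∑ j ∈ Finset.range (n+1), Complex.log (1 + x/((j:ℂ)+1))) := by
  have hprod : (∏ j ∈ Finset.range (n+1), ((1+x) + (j:ℂ)))
      = (((n+1).factorial : ℕ) : ℂ) * Complex.exp (∑ j ∈ Finset.range (n+1),
          Complex.log (1 + x/((j:ℂ)+1))) := by
    calc (∏ j ∈ Finset.range (n+1), ((1+x) + (j:ℂ)))
        = ∏ j ∈ Finset.range (n+1),
            (((j:ℂ)+1) * Complex.exp (Complex.log (1 + x/((j:ℂ)+1)))) := by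
          refine Finset.prod_congr rfl (fun j _ => ?_)
          rw [Complex.exp_log (one_add_ne' hx j)]
          have : ((j:ℂ)+1) ≠ 0 := by exact_mod_cast Nat.cast_add_one_ne_zero (R := ℂ) j
          field_simp
          ring
      _ = (∏ j ∈ Finset.range (n+1), ((j:ℂ)+1)) *
            ∏ j ∈ Finset.range (n+1), Complex.exp (Complex.log (1 + x/((j:ℂ)+1))) :=
          Finset.prod_mul_distrib
      _ = (((n+1).factorial : ℕ) : ℂ) * Complex.exp (∑ j ∈ Finset.range (n+1),
            Complex.log (1 + x/((j:ℂ)+1))) := by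
          rw [Complex.exp_sum]
          congr 1
          rw [← Finset.prod_range_add_one_eq_factorial (n+1)]
          push_cast
          rfl
  rw [Complex.GammaSeq, hprod]
  have hcpow : (n:ℂ)^(1+x) = Complex.exp ((Real.log n : ℂ) * (1+x)) := by
    rw [Complex.cpow_def_of_ne_zero (Nat.cast_ne_zero.mpr (by omega)), Complex.natCast_log]
  have hnp1 : (((n:ℝ)+1 : ℝ) : ℂ) = Complex.exp ((Real.log ((n:ℝ)+1) : ℂ)) := by
    rw [← Complex.ofReal_exp, Real.exp_log (by positivity)]
  rw [hcpow, Nat.factorial_succ]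
  rw [Complex.exp_sub, Complex.exp_sub, ← hnp1]
  have h1 : ((n.factorial : ℕ) : ℂ) ≠ 0 := by
    exact_mod_cast Nat.cast_ne_zero.mpr n.factorial_ne_zero
  have h2 : ((n:ℂ)+1) ≠ 0 := by exact_mod_cast Nat.cast_add_one_ne_zero (R := ℂ) n
  have h3 := Complex.exp_ne_zero (∑ j ∈ Finset.range (n+1), Complex.log (1 + x/((j:ℂ)+1)))
  push_cast
  field_simp

private lemma harmonic_cast_eq' (m : ℕ) :
    ((harmonic m : ℚ) : ℝ) = ∑ j ∈ Finset.range m, (1/((j:ℝ)+1)) := by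
  rw [harmonic]
  push_cast
  refine Finset.sum_congr rfl fun j _ => ?_
  rw [one_div]

/-- the Taylor expansion of `log Γ(1+x)`: for every complex `x`
with `|x| < 1`, the series `Σ_{k≥2} (−1)^k ζ(k) x^k / k` converges and
`Γ(1+x) = exp(−γx + Σ_{k≥2} (−1)^k ζ(k) x^k / k)`, where `Γ` is the complex
Gamma function, `ζ` the Riemann zeta function and `γ` the Euler–Mascheroni
constant. -/
theorem gamma_one_add_eq_exp_zeta_series (x : ℂ) (hx : ‖x‖ < 1) :
    Summable (fun k : ℕ =>
      (-1 : ℂ) ^ (k + 2) * riemannZeta (k + 2) * x ^ (k + 2) / (k + 2)) ∧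
    Complex.Gamma (1 + x) =
      Complex.exp (-(Real.eulerMascheroniConstant : ℂ) * x +
        ∑' k : ℕ, (-1 : ℂ) ^ (k + 2) * riemannZeta (k + 2) * x ^ (k + 2) / (k + 2)) := by
  have hx' : ‖x‖ < 1 := hx
  have hFs := summable_F' hx'
  set S : ℂ := ∑' p : ℕ × ℕ, ((-1:ℂ)^p.2 * (x/((p.1:ℂ)+1))^(p.2+2) / (p.2+2)) with hS
  have hcol : ∀ m : ℕ, HasSum (fun k : ℕ => (-1:ℂ)^k * (x/((m:ℂ)+1))^(k+2) / (k+2))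
      (x/((m:ℂ)+1) - Complex.log (1 + x/((m:ℂ)+1))) :=
    fun m => hasSum_log_aux' (norm_div_lt' hx' m)
  have hMsum : HasSum (fun m : ℕ => x/((m:ℂ)+1) - Complex.log (1 + x/((m:ℂ)+1))) S :=
    HasSum.prod_fiberwise hFs.hasSum hcol
  have hswap : HasSum (fun p : ℕ × ℕ => (-1:ℂ)^p.1 * (x/((p.2:ℂ)+1))^(p.1+2) / (p.1+2)) S :=
    ((Equiv.prodComm ℕ ℕ).hasSum_iff).mpr hFs.hasSum
  have hG : HasSum (fun k : ℕ =>
      (-1 : ℂ) ^ (k + 2) * riemannZeta (k + 2) * x ^ (k + 2) / (k + 2)) S :=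
    HasSum.prod_fiberwise hswap (fun k => row_hasSum' x k)
  refine ⟨hG.summable, ?_⟩
  -- limits
  have hA : Tendsto (fun n : ℕ => ((harmonic (n+1) : ℚ) : ℝ) - Real.log n) atTop
      (𝓝 Real.eulerMascheroniConstant) := by
    have h0 : Tendsto (fun n : ℕ => (((harmonic n : ℚ) : ℝ) - Real.log n) + 1/((n:ℝ)+1))
        atTop (𝓝 (Real.eulerMascheroniConstant + 0)) :=
      Real.tendsto_harmonic_sub_log.add tendsto_one_div_add_atTop_nhds_zero_nat
    rw [add_zero] at h0
    refine h0.congr fun n => ?_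
    rw [harmonic_succ]
    push_cast
    ring
  have hB : Tendsto (fun n : ℕ => ((harmonic (n+1) : ℚ) : ℝ) - Real.log (n+1)) atTop
      (𝓝 Real.eulerMascheroniConstant) := by
    have := Real.tendsto_harmonic_sub_log.comp (tendsto_add_atTop_nat 1)
    refine this.congr fun n => ?_
    simp only [Function.comp_apply]
    push_cast
    ring
  have hharm : Tendsto (fun n : ℕ => Real.log n - ∑ j ∈ Finset.range (n+1), (1/((j:ℝ)+1)))
      atTop (𝓝 (-Real.eulerMascheroniConstant)) := by
    have := hA.neg
    refine this.congr fun n => ?_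
    rw [← harmonic_cast_eq']
    ring
  have hlogdiff : Tendsto (fun n : ℕ => Real.log n - Real.log (n+1)) atTop (𝓝 0) := by
    have := hB.sub hA
    rw [sub_self] at this
    refine this.congr fun n => ?_
    ring
  have hpart : Tendsto (fun n : ℕ => ∑ j ∈ Finset.range (n+1),
      (x/((j:ℂ)+1) - Complex.log (1 + x/((j:ℂ)+1)))) atTop (𝓝 S) :=
    hMsum.tendsto_sum_nat.comp (tendsto_add_atTop_nat 1)
  have hharmC : Tendsto (fun n : ℕ =>
      ((Real.log n - ∑ j ∈ Finset.range (n+1), (1/((j:ℝ)+1)) : ℝ) : ℂ)) atTop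
      (𝓝 ((-Real.eulerMascheroniConstant : ℝ) : ℂ)) :=
    (Complex.continuous_ofReal.tendsto _).comp hharm
  have hlogdiffC : Tendsto (fun n : ℕ =>
      ((Real.log n - Real.log (n+1) : ℝ) : ℂ)) atTop (𝓝 ((0:ℝ):ℂ)) :=
    (Complex.continuous_ofReal.tendsto _).comp hlogdiff
  have hu : Tendsto (fun n : ℕ =>
      x * ((Real.log n - ∑ j ∈ Finset.range (n+1), (1/((j:ℝ)+1)) : ℝ) : ℂ)
      + ((Real.log n - Real.log (n+1) : ℝ) : ℂ)
      + ∑ j ∈ Finset.range (n+1), (x/((j:ℂ)+1) - Complex.log (1 + x/((j:ℂ)+1))))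
      atTop (𝓝 (x * ((-Real.eulerMascheroniConstant : ℝ) : ℂ) + ((0:ℝ):ℂ) + S)) :=
    ((tendsto_const_nhds.mul hharmC).add hlogdiffC).add hpart
  have hev : (fun n : ℕ => Complex.exp (
      x * ((Real.log n - ∑ j ∈ Finset.range (n+1), (1/((j:ℝ)+1)) : ℝ) : ℂ)
      + ((Real.log n - Real.log (n+1) : ℝ) : ℂ)
      + ∑ j ∈ Finset.range (n+1), (x/((j:ℂ)+1) - Complex.log (1 + x/((j:ℂ)+1)))))
      =ᶠ[atTop] Complex.GammaSeq (1+x) := by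
    filter_upwards [eventually_ge_atTop 1] with n hn
    rw [gammaSeq_eq_exp' hx' hn]
    congr 1
    have hsum_cast : ((∑ j ∈ Finset.range (n+1), (1/((j:ℝ)+1)) : ℝ) : ℂ)
        = ∑ j ∈ Finset.range (n+1), (1/((j:ℂ)+1)) := by
      push_cast
      rfl
    rw [Complex.ofReal_sub, Complex.ofReal_sub, hsum_cast, Finset.sum_sub_distrib,
      mul_sub, Finset.mul_sum]
    have hxs : ∀ j ∈ Finset.range (n+1), x * (1/((j:ℂ)+1)) = x/((j:ℂ)+1) :=
      fun j _ => by rw [mul_one_div]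
    rw [Finset.sum_congr rfl hxs]
    ring
  have hlim : Tendsto (Complex.GammaSeq (1+x)) atTop
      (𝓝 (Complex.exp (x * ((-Real.eulerMascheroniConstant : ℝ) : ℂ) + ((0:ℝ):ℂ) + S))) :=
    hu.cexp.congr' hev
  have := tendsto_nhds_unique (Complex.GammaSeq_tendsto_Gamma (1+x)) hlim
  rw [this, hG.tsum_eq]
  push_cast
  ring_nf
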